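/- Let V: H → H' be an isometry, {M_a}_{a∈{0,1}ⁿ} a projective measurement on H, |ψ⟩ ∈ H a unit state with p(a) = ⟨ψ|M_a|ψ⟩, and {M'_a} a projective measurement on H' with state |ψ'⟩ such that M'_a|ψ'⟩ ≠ 0 for all a. If for all s ∈ {0,1}ⁿ the observables M^s = Σ_a (−1)^{a·s} M_a and M'^s = Σ_a (−1)^{a·s} M'_a satisfy ‖V M^s|ψ⟩ − M'^s|ψ'⟩‖ ≤ δ, then, defining the random variable D(a) = (1/2)‖ V M_a|ψ⟩⟨ψ|M_a V† / p(a) − M'_a|ψ'⟩⟨ψ'|M'_a / ⟨ψ'|M'_a|ψ'⟩ ‖₁ on outcomes a with p(a) > 0, one has Pr_{a∼p}(D ≤ δ^{2/3}) ≥ 1 − 4δ^{2/3}. -/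

import Mathlib

open scoped ComplexOrder InnerProductSpace
open Classical

/-- The trace norm (Schatten 1-norm) of a square complex matrix:
`‖A‖₁ = tr √(AᴴA)`. -/
noncomputable def traceNorm {d : ℕ} (A : Matrix (Fin d) (Fin d) ℂ) : ℝ :=
  (((Matrix.posSemidef_conjTranspose_mul_self A).1.eigenvectorUnitary : Matrix (Fin d) (Fin d) ℂ) *
    Matrix.diagonal (((↑) : ℝ → ℂ) ∘ (Real.sqrt ∘ (Matrix.posSemidef_conjTranspose_mul_self A).1.eigenvalues)) *
    (star (Matrix.posSemidef_conjTranspose_mul_self A).1.eigenvectorUnitary :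
      Matrix (Fin d) (Fin d) ℂ)).trace.re

/-- The rank-one operator `|u⟩⟨u|` associated to a vector `u`. -/
noncomputable def outer {d : ℕ} (u : EuclideanSpace ℂ (Fin d)) :
    Matrix (Fin d) (Fin d) ℂ :=
  Matrix.of fun i j => u i * (starRingEnd ℂ) (u j)

/-- The number of positions at which both bit strings are `1`. -/
def dotCount {n : ℕ} (a s : Fin n → Bool) : ℕ :=
  ∑ j, if a j && s j then 1 else 0

/-- The observable `M^s = Σ_a (−1)^{a·s} M_a`. -/
noncomputable def obsOf {n d : ℕ} (M : (Fin n → Bool) → Matrix (Fin d) (Fin d) ℂ)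
    (s : Fin n → Bool) : Matrix (Fin d) (Fin d) ℂ :=
  ∑ a, ((-1 : ℂ) ^ dotCount a s) • M a

/-- The outcome probability `p(a) = ⟨ψ|M_a|ψ⟩`. -/
noncomputable def outcomeProb {n d : ℕ} (M : (Fin n → Bool) → Matrix (Fin d) (Fin d) ℂ)
    (ψ : EuclideanSpace ℂ (Fin d)) (a : Fin n → Bool) : ℝ :=
  (⟪ψ, Matrix.toEuclideanLin (M a) ψ⟫_ℂ).re

/-- The random variable `D(a)`: one half the trace distance between the (normalized)
physical and reference post-measurement states for outcome `a` (and `0` when `p(a) = 0`). -/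
noncomputable def postMeasTraceDist {n d d' : ℕ}
    (V : Matrix (Fin d') (Fin d) ℂ)
    (M : (Fin n → Bool) → Matrix (Fin d) (Fin d) ℂ) (ψ : EuclideanSpace ℂ (Fin d))
    (M' : (Fin n → Bool) → Matrix (Fin d') (Fin d') ℂ) (ψ' : EuclideanSpace ℂ (Fin d'))
    (a : Fin n → Bool) : ℝ :=
  if 0 < outcomeProb M ψ a then
    (1 / 2) * traceNorm
      (((outcomeProb M ψ a : ℂ))⁻¹ • outer (Matrix.toEuclideanLin (V * M a) ψ) -
        ((outcomeProb M' ψ' a : ℂ))⁻¹ • outer (Matrix.toEuclideanLin (M' a) ψ'))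
  else 0

/-! ### Auxiliary lemmas -/

section Aux

open Matrix

lemma herm_decomp {d : ℕ} {X : Matrix (Fin d) (Fin d) ℂ} (hX : X.IsHermitian) :
    traceNorm X = ∑ i, |hX.eigenvalues i| ∧ (X * X).trace.re = ∑ i, (hX.eigenvalues i)^2 := by
  set U : Matrix (Fin d) (Fin d) ℂ := (hX.eigenvectorUnitary : Matrix (Fin d) (Fin d) ℂ) with hU
  have hUU : star U * U = 1 := by
    simpa [hU] using (Matrix.mem_unitaryGroup_iff').mp hX.eigenvectorUnitary.2
  have hspec : X = U * diagonal (fun i => ((hX.eigenvalues i : ℝ) : ℂ)) * star U := by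
    convert hX.spectral_theorem using 2
    rfl
  have key : ∀ f : Fin d → ℝ,
      ((U * diagonal (fun i => ((f i : ℝ) : ℂ)) * star U).trace) = ∑ i, ((f i : ℝ) : ℂ) := by
    intro f
    rw [Matrix.trace_mul_cycle, hUU, Matrix.one_mul, Matrix.trace_diagonal]
  have conj_mul : ∀ f g : Fin d → ℝ,
      (U * diagonal (fun i => ((f i : ℝ) : ℂ)) * star U) *
        (U * diagonal (fun i => ((g i : ℝ) : ℂ)) * star U)
        = U * diagonal (fun i => ((f i * g i : ℝ) : ℂ)) * star U := by
    intro f g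
    simp only [Matrix.mul_assoc]
    rw [← Matrix.mul_assoc (star U) U, hUU, Matrix.one_mul,
      ← Matrix.mul_assoc (diagonal _), Matrix.diagonal_mul_diagonal]
    congr 2
    funext i
    push_cast
    ring
  have habs : (fun i => ((|hX.eigenvalues i| * |hX.eigenvalues i| : ℝ) : ℂ))
      = fun i => ((hX.eigenvalues i * hX.eigenvalues i : ℝ) : ℂ) := by
    funext i; rw [abs_mul_abs_self]
  have hXX : X * X = U * diagonal (fun i => ((hX.eigenvalues i * hX.eigenvalues i : ℝ) : ℂ)) * star U := by
    conv_lhs => rw [hspec]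
    exact conj_mul _ _
  constructor
  · have e1 : traceNorm X = (cfc Real.sqrt (Xᴴ * X)).trace.re := by
      rw [(Matrix.posSemidef_conjTranspose_mul_self X).1.cfc_eq]; rfl
    have e2 : cfc Real.sqrt (Xᴴ * X) = cfc (fun x : ℝ => |x|) X := by
      rw [hX.eq, ← pow_two, ← cfc_comp_pow Real.sqrt 2 X]
      congr 1; funext x; exact Real.sqrt_sq_eq_abs x
    rw [e1, e2, hX.cfc_eq, Matrix.IsHermitian.cfc, Unitary.conjStarAlgAut_apply, ← hU,
      Matrix.trace_mul_cycle, hUU, Matrix.one_mul, Matrix.trace_diagonal]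
    simp [Complex.re_sum]
  · rw [hXX, key]
    push_cast
    simp [pow_two]

lemma traceNorm_nonneg_herm {d : ℕ} {X : Matrix (Fin d) (Fin d) ℂ} (hX : X.IsHermitian) :
    0 ≤ traceNorm X := by
  rw [(herm_decomp hX).1]
  exact Finset.sum_nonneg fun i _ => abs_nonneg _

lemma matrix_rank_add_le {d : ℕ} (A B : Matrix (Fin d) (Fin d) ℂ) :
    (A + B).rank ≤ A.rank + B.rank := by
  rw [Matrix.rank, Matrix.rank, Matrix.rank, Matrix.mulVecLin_add]
  have h1 : LinearMap.range (A.mulVecLin + B.mulVecLin) ≤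
      LinearMap.range A.mulVecLin ⊔ LinearMap.range B.mulVecLin := by
    rintro x ⟨y, rfl⟩
    exact Submodule.mem_sup.mpr ⟨A.mulVecLin y, ⟨y, rfl⟩, B.mulVecLin y, ⟨y, rfl⟩, rfl⟩
  exact le_trans (Submodule.finrank_mono h1)
    (Submodule.finrank_add_le_finrank_add_finrank _ _)

lemma rank_colrow_le {d : ℕ} (x y : Fin d → ℂ) :
    (Matrix.replicateCol Unit x * Matrix.replicateRow Unit y).rank ≤ 1 := by
  refine le_trans (Matrix.rank_mul_le_left _ _) (le_trans (Matrix.rank_le_card_width _) ?_)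
  simp

lemma rank_outer_sub_le {d : ℕ} (u v : EuclideanSpace ℂ (Fin d)) :
    (outer u - outer v).rank ≤ 2 := by
  have h1 : outer u - outer v =
      Matrix.replicateCol Unit u * Matrix.replicateRow Unit (star (u : Fin d → ℂ)) +
      Matrix.replicateCol Unit (-(v : Fin d → ℂ)) * Matrix.replicateRow Unit (star (v : Fin d → ℂ)) := by
    ext i j
    simp [outer, Matrix.mul_apply, Matrix.replicateCol, Matrix.replicateRow, Pi.star_apply, RCLike.star_def]
    ring
  rw [h1]
  exact le_trans (matrix_rank_add_le _ _) (add_le_add (rank_colrow_le _ _) (rank_colrow_le _ _))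

lemma outer_herm {d : ℕ} (u : EuclideanSpace ℂ (Fin d)) : (outer u).IsHermitian := by
  ext i j
  simp [outer, Matrix.conjTranspose_apply, mul_comm]

lemma trace_outer_mul {d : ℕ} (x y : EuclideanSpace ℂ (Fin d)) :
    (outer x * outer y).trace = ⟪x, y⟫_ℂ * ⟪y, x⟫_ℂ := by
  simp only [Matrix.trace, Matrix.diag, Matrix.mul_apply, outer, Matrix.of_apply,
    PiLp.inner_apply, RCLike.inner_apply, starRingEnd_apply, RingHom.coe_coe]
  rw [Finset.sum_mul_sum]
  rw [Finset.sum_comm]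
  congr 1; funext i; congr 1; funext k
  ring

lemma traceNorm_outer_sub_le {d : ℕ} (u v : EuclideanSpace ℂ (Fin d))
    (hu : ‖u‖ = 1) (hv : ‖v‖ = 1) :
    traceNorm (outer u - outer v) ≤ 2 * ‖u - v‖ := by
  have hX : (outer u - outer v).IsHermitian := (outer_herm u).sub (outer_herm v)
  obtain ⟨h1, h2⟩ := herm_decomp hX
  set r : ℝ := ‖⟪u, v⟫_ℂ‖ with hr
  have hinner_uu : ⟪u, u⟫_ℂ = 1 := by
    rw [inner_self_eq_norm_sq_to_K, hu]; norm_num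
  have hinner_vv : ⟪v, v⟫_ℂ = 1 := by
    rw [inner_self_eq_norm_sq_to_K, hv]; norm_num
  have hvu : ⟪v, u⟫_ℂ = (starRingEnd ℂ) ⟪u, v⟫_ℂ := (inner_conj_symm v u).symm
  have hcross : (⟪u, v⟫_ℂ * ⟪v, u⟫_ℂ).re = r^2 := by
    rw [hvu, Complex.mul_conj, hr, Complex.sq_norm]
    exact Complex.ofReal_re _
  have htr : ((outer u - outer v) * (outer u - outer v)).trace.re = 2 - 2*r^2 := by
    have hexp : (outer u - outer v) * (outer u - outer v) =
        outer u * outer u - outer u * outer v - outer v * outer u + outer v * outer v := by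
      noncomm_ring
    rw [hexp]
    simp only [Matrix.trace_add, Matrix.trace_sub, trace_outer_mul, hinner_uu, hinner_vv,
      Complex.add_re, Complex.sub_re]
    rw [hcross]
    have hcross' : (⟪v, u⟫_ℂ * ⟪u, v⟫_ℂ).re = r^2 := by rw [mul_comm]; exact hcross
    rw [hcross']
    simp
    ring
  have hcard : (Finset.univ.filter (fun i => hX.eigenvalues i ≠ 0)).card ≤ 2 := by
    have hrk := hX.rank_eq_card_non_zero_eigs
    rw [Fintype.card_subtype] at hrk
    rw [← hrk]
    exact rank_outer_sub_le u v
  set s := Finset.univ.filter (fun i => hX.eigenvalues i ≠ 0) with hs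
  have hzero : ∀ i, i ∉ s → hX.eigenvalues i = 0 := by
    intro i hi
    by_contra hne
    exact hi (Finset.mem_filter.mpr ⟨Finset.mem_univ _, hne⟩)
  have hsum_eq : ∑ i, |hX.eigenvalues i| = ∑ i ∈ s, |hX.eigenvalues i| :=
    (Finset.sum_subset (Finset.subset_univ _) (fun i _ hi => by rw [hzero i hi]; simp)).symm
  have hsq_eq : ∑ i, (hX.eigenvalues i)^2 = ∑ i ∈ s, (hX.eigenvalues i)^2 :=
    (Finset.sum_subset (Finset.subset_univ _) (fun i _ hi => by rw [hzero i hi]; simp)).symm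
  have hCS : (∑ i ∈ s, |hX.eigenvalues i|)^2 ≤ (s.card : ℝ) * ∑ i ∈ s, |hX.eigenvalues i|^2 :=
    sq_sum_le_card_mul_sum_sq
  have habs_sq : ∀ i, |hX.eigenvalues i|^2 = (hX.eigenvalues i)^2 := fun i => sq_abs _
  have hre : r ≤ 1 := by
    rw [hr]
    calc ‖⟪u, v⟫_ℂ‖ ≤ ‖u‖ * ‖v‖ := norm_inner_le_norm u v
    _ = 1 := by rw [hu, hv]; ring
  have hre2 : 2 - 2 * Complex.re ⟪u, v⟫_ℂ = ‖u - v‖^2 := by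
    rw [norm_sub_sq (𝕜 := ℂ), hu, hv]
    simp [RCLike.re]
    ring
  have hrele : Complex.re ⟪u, v⟫_ℂ ≤ r := by
    rw [hr]
    exact Complex.re_le_norm _
  have hmain : (traceNorm (outer u - outer v))^2 ≤ (2 * ‖u - v‖)^2 := by
    rw [h1, hsum_eq]
    calc (∑ i ∈ s, |hX.eigenvalues i|)^2
        ≤ (s.card : ℝ) * ∑ i ∈ s, |hX.eigenvalues i|^2 := hCS
      _ ≤ 2 * ∑ i ∈ s, |hX.eigenvalues i|^2 := by
          apply mul_le_mul_of_nonneg_right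
          · exact_mod_cast hcard
          · exact Finset.sum_nonneg fun i _ => sq_nonneg _
      _ = 2 * ∑ i ∈ s, (hX.eigenvalues i)^2 := by simp_rw [habs_sq]
      _ = 2 * ((outer u - outer v) * (outer u - outer v)).trace.re := by
          rw [h2, hsq_eq]
      _ = 2 * (2 - 2*r^2) := by rw [htr]
      _ ≤ 4 * (2 - 2 * Complex.re ⟪u, v⟫_ℂ) := by nlinarith
      _ = (2 * ‖u - v‖)^2 := by rw [hre2]; ring
  have hnn : 0 ≤ traceNorm (outer u - outer v) := traceNorm_nonneg_herm hX
  nlinarith [norm_nonneg (u - v)]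

lemma orth {n : ℕ} (a b : Fin n → Bool) :
    ∑ s : Fin n → Bool, ((-1:ℂ) ^ dotCount a s * (-1) ^ dotCount b s)
      = if a = b then (2:ℂ)^n else 0 := by
  have hterm : ∀ s : Fin n → Bool, ((-1:ℂ) ^ dotCount a s * (-1) ^ dotCount b s)
      = ∏ j, ((-1:ℂ) ^ ((if a j && s j then 1 else 0) + (if b j && s j then 1 else 0))) := by
    intro s
    rw [← pow_add, dotCount, dotCount, ← Finset.sum_add_distrib, ← Finset.prod_pow_eq_pow_sum]
  simp_rw [hterm]
  rw [← Fintype.piFinset_univ, ← Finset.prod_univ_sum (t := fun _ => (Finset.univ : Finset Bool))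
    (f := fun j c => ((-1:ℂ) ^ ((if a j && c then 1 else 0) + (if b j && c then 1 else 0))))]
  have hfac : ∀ j : Fin n, (∑ c : Bool, ((-1:ℂ) ^ ((if a j && c then 1 else 0) + (if b j && c then 1 else 0))))
      = if a j = b j then 2 else 0 := by
    intro j
    cases ha : a j <;> cases hb : b j <;> simp [Fintype.sum_bool]
  simp_rw [hfac]
  by_cases hab : a = b
  · subst hab
    simp [Finset.prod_const]
  · obtain ⟨j, hj⟩ := Function.ne_iff.mp hab
    rw [if_neg hab]
    exact Finset.prod_eq_zero (Finset.mem_univ j) (by rw [if_neg hj])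

lemma parseval {n d' : ℕ} (w : (Fin n → Bool) → EuclideanSpace ℂ (Fin d')) :
    ∑ s : Fin n → Bool, ‖∑ a, ((-1:ℂ)^dotCount a s) • w a‖^2
      = 2^n * ∑ a, ‖w a‖^2 := by
  have expand : ∀ s : Fin n → Bool,
      ⟪∑ a, ((-1:ℂ)^dotCount a s) • w a, ∑ b, ((-1:ℂ)^dotCount b s) • w b⟫_ℂ
        = ∑ a, ∑ b, ((-1:ℂ)^dotCount a s * (-1)^dotCount b s) * ⟪w a, w b⟫_ℂ := by
    intro s
    rw [sum_inner]
    congr 1; funext a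
    rw [inner_sum]
    congr 1; funext b
    rw [inner_smul_left, inner_smul_right]
    simp [map_pow]
    ring
  have complex_eq : ∑ s : Fin n → Bool,
      ⟪∑ a, ((-1:ℂ)^dotCount a s) • w a, ∑ a, ((-1:ℂ)^dotCount a s) • w a⟫_ℂ
        = (2:ℂ)^n * ∑ a, ⟪w a, w a⟫_ℂ := by
    simp_rw [expand]
    rw [Finset.sum_comm]
    have : ∀ a, ∑ s : Fin n → Bool, ∑ b, ((-1:ℂ)^dotCount a s * (-1)^dotCount b s) * ⟪w a, w b⟫_ℂ
        = (2:ℂ)^n * ⟪w a, w a⟫_ℂ := by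
      intro a
      rw [Finset.sum_comm]
      have : ∀ b, ∑ s : Fin n → Bool, ((-1:ℂ)^dotCount a s * (-1)^dotCount b s) * ⟪w a, w b⟫_ℂ
          = (if a = b then (2:ℂ)^n else 0) * ⟪w a, w b⟫_ℂ := by
        intro b
        rw [← Finset.sum_mul, orth]
      simp_rw [this]
      simp [Finset.sum_ite_eq, ite_mul]
    simp_rw [this]
    rw [Finset.mul_sum]
  have re_eq := congrArg Complex.re complex_eq
  rw [Complex.re_sum, show ((2:ℂ)^n) = (((2:ℝ)^n : ℝ) : ℂ) by push_cast; ring,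
    Complex.re_ofReal_mul, Complex.re_sum] at re_eq
  have hre : ∀ x : EuclideanSpace ℂ (Fin d'), (⟪x, x⟫_ℂ).re = ‖x‖^2 := fun x =>
    inner_self_eq_norm_sq (𝕜 := ℂ) x
  simp_rw [hre] at re_eq
  exact re_eq

lemma toEL_mul {d e f : ℕ} (A : Matrix (Fin d) (Fin e) ℂ) (B : Matrix (Fin e) (Fin f) ℂ)
    (x : EuclideanSpace ℂ (Fin f)) :
    Matrix.toEuclideanLin (A*B) x = Matrix.toEuclideanLin A (Matrix.toEuclideanLin B x) := by
  simp [Matrix.toEuclideanLin_apply, Matrix.mulVec_mulVec]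

lemma toEL_adj {d e : ℕ} (A : Matrix (Fin d) (Fin e) ℂ) (x : EuclideanSpace ℂ (Fin d))
    (y : EuclideanSpace ℂ (Fin e)) :
    ⟪x, Matrix.toEuclideanLin A y⟫_ℂ = ⟪Matrix.toEuclideanLin A.conjTranspose x, y⟫_ℂ := by
  rw [Matrix.toEuclideanLin_conjTranspose_eq_adjoint, LinearMap.adjoint_inner_left]

lemma toEL_one {d : ℕ} (x : EuclideanSpace ℂ (Fin d)) :
    Matrix.toEuclideanLin (1 : Matrix (Fin d) (Fin d) ℂ) x = x := by
  simp [Matrix.toEuclideanLin_apply]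

lemma prob_eq {d : ℕ} (A : Matrix (Fin d) (Fin d) ℂ) (hA : A.IsHermitian) (hP : A*A = A)
    (ψ : EuclideanSpace ℂ (Fin d)) :
    (⟪ψ, Matrix.toEuclideanLin A ψ⟫_ℂ).re = ‖Matrix.toEuclideanLin A ψ‖^2 := by
  conv_lhs => rw [← hP, toEL_mul, toEL_adj, hA.eq]
  exact inner_self_eq_norm_sq (𝕜 := ℂ) _

lemma isom_norm {d d' : ℕ} (V : Matrix (Fin d') (Fin d) ℂ) (hV : V.conjTranspose * V = 1)
    (x : EuclideanSpace ℂ (Fin d)) :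
    ‖Matrix.toEuclideanLin V x‖ = ‖x‖ := by
  have h2 : ‖Matrix.toEuclideanLin V x‖^2 = ‖x‖^2 := by
    rw [← inner_self_eq_norm_sq (𝕜 := ℂ), ← inner_self_eq_norm_sq (𝕜 := ℂ) x]
    congr 1
    rw [toEL_adj, ← toEL_mul, hV, toEL_one]
  have := congrArg Real.sqrt h2
  rwa [Real.sqrt_sq (norm_nonneg _), Real.sqrt_sq (norm_nonneg _)] at this

lemma outer_real_smul {d : ℕ} (r : ℝ) (x : EuclideanSpace ℂ (Fin d)) :
    outer (r • x) = ((r^2 : ℝ) : ℂ) • outer x := by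
  ext i j
  simp [outer, PiLp.smul_apply, Complex.real_smul, Matrix.smul_apply, Complex.conj_ofReal]
  ring

lemma normalize_sub_le {E : Type*} [NormedAddCommGroup E] [NormedSpace ℝ E]
    (u v : E) (hu : u ≠ 0) (hv : v ≠ 0) :
    ‖(‖u‖⁻¹ : ℝ) • u - (‖v‖⁻¹ : ℝ) • v‖ ≤ 2 * ‖u - v‖ / ‖u‖ := by
  have hs : (0:ℝ) < ‖u‖ := norm_pos_iff.mpr hu
  have htp : (0:ℝ) < ‖v‖ := norm_pos_iff.mpr hv
  have step : (‖u‖⁻¹ : ℝ) • u - (‖v‖⁻¹ : ℝ) • v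
      = (‖u‖⁻¹ : ℝ) • (u - v) + ((‖u‖⁻¹ : ℝ) - (‖v‖⁻¹ : ℝ)) • v := by
    rw [smul_sub, sub_smul]
    abel
  rw [step]
  refine le_trans (norm_add_le _ _) ?_
  rw [norm_smul, norm_smul]
  have h1 : ‖(‖u‖⁻¹ : ℝ)‖ = ‖u‖⁻¹ := by
    rw [Real.norm_eq_abs, abs_of_pos (by positivity)]
  have h2 : ‖(‖u‖⁻¹ : ℝ) - (‖v‖⁻¹ : ℝ)‖ * ‖v‖ ≤ ‖u - v‖ / ‖u‖ := by
    rw [Real.norm_eq_abs]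
    have : |(‖u‖⁻¹ : ℝ) - ‖v‖⁻¹| = |‖v‖ - ‖u‖| / (‖u‖ * ‖v‖) := by
      rw [show (‖u‖⁻¹ : ℝ) - ‖v‖⁻¹ = (‖v‖ - ‖u‖) / (‖u‖ * ‖v‖) by field_simp, abs_div]
      congr 1
      rw [abs_of_pos (by positivity)]
    rw [this]
    have habs : |‖v‖ - ‖u‖| ≤ ‖u - v‖ := by
      rw [abs_sub_comm]
      exact (abs_norm_sub_norm_le u v).trans (le_of_eq rfl)
    calc |‖v‖ - ‖u‖| / (‖u‖ * ‖v‖) * ‖v‖ = |‖v‖ - ‖u‖| / ‖u‖ := by field_simp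
      _ ≤ ‖u - v‖ / ‖u‖ := by gcongr
  calc ‖(‖u‖⁻¹:ℝ)‖ * ‖u - v‖ + ‖(‖u‖⁻¹:ℝ) - ‖v‖⁻¹‖ * ‖v‖
      ≤ ‖u - v‖ / ‖u‖ + ‖u - v‖ / ‖u‖ := by
        rw [h1]
        exact add_le_add (le_of_eq (by rw [inv_mul_eq_div])) h2
    _ = 2 * ‖u - v‖ / ‖u‖ := by ring

end Aux

set_option maxHeartbeats 2000000 in
/-- from `‖V M^s ψ − M'^s ψ'‖ ≤ δ` for all `s`, the trace distance between the
normalized post-measurement states is at most `δ^{2/3}` with probability at least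
`1 − 4δ^{2/3}` over outcomes `a ∼ p`. -/
theorem robust_prob {n d d' : ℕ}
    (V : Matrix (Fin d') (Fin d) ℂ) (hV : V.conjTranspose * V = 1)
    (M : (Fin n → Bool) → Matrix (Fin d) (Fin d) ℂ)
    (hMherm : ∀ a, (M a).IsHermitian) (hMproj : ∀ a, M a * M a = M a)
    (hMsum : ∑ a, M a = 1)
    (ψ : EuclideanSpace ℂ (Fin d)) (hψ : ‖ψ‖ = 1)
    (M' : (Fin n → Bool) → Matrix (Fin d') (Fin d') ℂ)
    (hM'herm : ∀ a, (M' a).IsHermitian) (hM'proj : ∀ a, M' a * M' a = M' a)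
    (hM'sum : ∑ a, M' a = 1)
    (ψ' : EuclideanSpace ℂ (Fin d')) (hψ' : ‖ψ'‖ = 1)
    (hnz : ∀ a, Matrix.toEuclideanLin (M' a) ψ' ≠ 0)
    (δ : ℝ)
    (h : ∀ s : Fin n → Bool,
      ‖Matrix.toEuclideanLin (V * obsOf M s) ψ - Matrix.toEuclideanLin (obsOf M' s) ψ'‖ ≤ δ) :
    1 - 4 * δ ^ ((2 : ℝ) / 3) ≤
      ∑ a : Fin n → Bool,
        if postMeasTraceDist V M ψ M' ψ' a ≤ δ ^ ((2 : ℝ) / 3) then outcomeProb M ψ a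
        else 0 := by
  classical
  have hδ0 : 0 ≤ δ := le_trans (norm_nonneg _) (h (fun _ => false))
  set t := δ ^ ((2:ℝ)/3) with ht
  have ht0 : 0 ≤ t := Real.rpow_nonneg hδ0 _
  set u : (Fin n → Bool) → EuclideanSpace ℂ (Fin d') :=
    fun a => Matrix.toEuclideanLin (V * M a) ψ with hudef
  set v : (Fin n → Bool) → EuclideanSpace ℂ (Fin d') :=
    fun a => Matrix.toEuclideanLin (M' a) ψ' with hvdef
  set D : (Fin n → Bool) → ℝ := postMeasTraceDist V M ψ M' ψ' with hDdef
  -- probabilities as squared norms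
  have hpu : ∀ a, outcomeProb M ψ a = ‖u a‖^2 := by
    intro a
    have h1 : outcomeProb M ψ a = ‖Matrix.toEuclideanLin (M a) ψ‖^2 :=
      prob_eq (M a) (hMherm a) (hMproj a) ψ
    rw [h1, hudef]
    simp only
    rw [toEL_mul, isom_norm V hV]
  have hqv : ∀ a, outcomeProb M' ψ' a = ‖v a‖^2 := fun a =>
    prob_eq (M' a) (hM'herm a) (hM'proj a) ψ'
  have hp_nonneg : ∀ a, 0 ≤ outcomeProb M ψ a := fun a => by rw [hpu]; positivity
  have hv_ne : ∀ a, v a ≠ 0 := fun a => hnz a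
  have hq_pos : ∀ a, 0 < outcomeProb M' ψ' a := by
    intro a
    rw [hqv]
    exact pow_pos (norm_pos_iff.mpr (hv_ne a)) 2
  -- total probability is 1
  have hsum_p : ∑ a, outcomeProb M ψ a = 1 := by
    unfold outcomeProb
    rw [← Complex.re_sum]
    have hlin : ∑ a, ⟪ψ, Matrix.toEuclideanLin (M a) ψ⟫_ℂ = ⟪ψ, ψ⟫_ℂ := by
      rw [← inner_sum]
      congr 1
      have : (∑ a, Matrix.toEuclideanLin (M a) ψ)
          = Matrix.toEuclideanLin (∑ a, M a) ψ := by
        rw [map_sum, LinearMap.sum_apply]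
      rw [this, hMsum, toEL_one]
    rw [hlin]
    have : (⟪ψ, ψ⟫_ℂ).re = ‖ψ‖^2 := inner_self_eq_norm_sq (𝕜 := ℂ) ψ
    rw [this, hψ]
    norm_num
  -- Parseval bound
  have hpars : ∑ a, ‖u a - v a‖^2 ≤ δ^2 := by
    have hys : ∀ s : Fin n → Bool, (∑ a, ((-1:ℂ)^dotCount a s) • (u a - v a))
        = Matrix.toEuclideanLin (V * obsOf M s) ψ - Matrix.toEuclideanLin (obsOf M' s) ψ' := by
      intro s
      have h1 : Matrix.toEuclideanLin (V * obsOf M s) ψ = ∑ a, ((-1:ℂ)^dotCount a s) • u a := by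
        rw [obsOf, Matrix.mul_sum]
        simp_rw [Matrix.mul_smul]
        rw [map_sum, LinearMap.sum_apply]
        apply Finset.sum_congr rfl
        intro a _
        rw [map_smul, LinearMap.smul_apply]
      have h2 : Matrix.toEuclideanLin (obsOf M' s) ψ' = ∑ a, ((-1:ℂ)^dotCount a s) • v a := by
        rw [obsOf, map_sum, LinearMap.sum_apply]
        apply Finset.sum_congr rfl
        intro a _
        rw [map_smul, LinearMap.smul_apply]
      rw [h1, h2, ← Finset.sum_sub_distrib]
      apply Finset.sum_congr rfl
      intro a _
      rw [smul_sub]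
    have hple := parseval (fun a => u a - v a)
    have hbound : ∑ s : Fin n → Bool, ‖∑ a, ((-1:ℂ)^dotCount a s) • (u a - v a)‖^2
        ≤ 2^n * δ^2 := by
      calc ∑ s : Fin n → Bool, ‖∑ a, ((-1:ℂ)^dotCount a s) • (u a - v a)‖^2
          ≤ ∑ _s : Fin n → Bool, δ^2 := by
            apply Finset.sum_le_sum
            intro s _
            rw [hys s]
            exact pow_le_pow_left₀ (norm_nonneg _) (h s) 2
        _ = 2^n * δ^2 := by
            rw [Finset.sum_const, Finset.card_univ]
            rw [show Fintype.card (Fin n → Bool) = 2^n by simp [Fintype.card_fun]]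
            rw [nsmul_eq_mul]
            push_cast
            ring
    rw [hple] at hbound
    have h2n : (0:ℝ) < 2^n := by positivity
    exact le_of_mul_le_mul_left hbound h2n
  -- per-outcome bound
  have hkey : ∀ a, outcomeProb M ψ a * (D a)^2 ≤ 4 * ‖u a - v a‖^2 := by
    intro a
    by_cases hpa : 0 < outcomeProb M ψ a
    · have hD : D a = (1/2) * traceNorm
          (((outcomeProb M ψ a : ℂ))⁻¹ • outer (u a) -
            ((outcomeProb M' ψ' a : ℂ))⁻¹ • outer (v a)) := by
        rw [hDdef, postMeasTraceDist, if_pos hpa]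
      have hua_pos : 0 < ‖u a‖ := by
        have h1 := hpa
        rw [hpu a] at h1
        by_contra hcon
        push_neg at hcon
        have : ‖u a‖ = 0 := le_antisymm hcon (norm_nonneg _)
        rw [this] at h1
        norm_num at h1
      have hva_pos : 0 < ‖v a‖ := norm_pos_iff.mpr (hv_ne a)
      have hueq : ((outcomeProb M ψ a : ℂ))⁻¹ • outer (u a) = outer ((‖u a‖⁻¹ : ℝ) • u a) := by
        rw [outer_real_smul]
        congr 1
        rw [hpu a]
        push_cast
        rw [inv_pow]
      have hveq : ((outcomeProb M' ψ' a : ℂ))⁻¹ • outer (v a) = outer ((‖v a‖⁻¹ : ℝ) • v a) := by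
        rw [outer_real_smul]
        congr 1
        rw [hqv a]
        push_cast
        rw [inv_pow]
      have hunorm : ‖(‖u a‖⁻¹ : ℝ) • u a‖ = 1 := by
        rw [norm_smul, Real.norm_eq_abs, abs_of_pos (by positivity), inv_mul_cancel₀ hua_pos.ne']
      have hvnorm : ‖(‖v a‖⁻¹ : ℝ) • v a‖ = 1 := by
        rw [norm_smul, Real.norm_eq_abs, abs_of_pos (by positivity), inv_mul_cancel₀ hva_pos.ne']
      have hD_nonneg : 0 ≤ D a := by
        rw [hD, hueq, hveq]
        have := traceNorm_nonneg_herm ((outer_herm ((‖u a‖⁻¹ : ℝ) • u a)).sub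
          (outer_herm ((‖v a‖⁻¹ : ℝ) • v a)))
        linarith
      have hdiff : ‖(‖u a‖⁻¹ : ℝ) • u a - (‖v a‖⁻¹ : ℝ) • v a‖ ≤ 2 * ‖u a - v a‖ / ‖u a‖ :=
        normalize_sub_le (u a) (v a) (by intro hc; rw [hc] at hua_pos; simp at hua_pos)
          (hv_ne a)
      have hD_le : D a ≤ 2 * ‖u a - v a‖ / ‖u a‖ := by
        rw [hD, hueq, hveq]
        have h3 := traceNorm_outer_sub_le _ _ hunorm hvnorm
        have h4 : ‖(‖u a‖⁻¹ : ℝ) • u a - (‖v a‖⁻¹ : ℝ) • v a‖ ≤ 2 * ‖u a - v a‖ / ‖u a‖ := hdiff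
        linarith
      have hsq : (D a)^2 ≤ (2 * ‖u a - v a‖ / ‖u a‖)^2 := pow_le_pow_left₀ hD_nonneg hD_le 2
      rw [hpu a]
      have hexpand : (2 * ‖u a - v a‖ / ‖u a‖)^2 = 4 * ‖u a - v a‖^2 / ‖u a‖^2 := by
        field_simp
        ring
      calc ‖u a‖^2 * (D a)^2 ≤ ‖u a‖^2 * (4 * ‖u a - v a‖^2 / ‖u a‖^2) := by
            rw [← hexpand]
            exact mul_le_mul_of_nonneg_left hsq (sq_nonneg _)
        _ = 4 * ‖u a - v a‖^2 := by field_simp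
    · have hpa0 : outcomeProb M ψ a = 0 := le_antisymm (not_lt.mp hpa) (hp_nonneg a)
      rw [hpa0]
      have : (0:ℝ) ≤ 4 * ‖u a - v a‖^2 := by positivity
      linarith
  have hsumD : ∑ a, outcomeProb M ψ a * (D a)^2 ≤ 4 * δ^2 := by
    calc ∑ a, outcomeProb M ψ a * (D a)^2 ≤ ∑ a, 4 * ‖u a - v a‖^2 :=
          Finset.sum_le_sum fun a _ => hkey a
      _ = 4 * ∑ a, ‖u a - v a‖^2 := by rw [Finset.mul_sum]
      _ ≤ 4 * δ^2 := by linarith [hpars]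
  -- Markov
  have hsplit : (∑ a, if D a ≤ t then outcomeProb M ψ a else 0)
      = 1 - ∑ a, (if D a ≤ t then 0 else outcomeProb M ψ a) := by
    have hsum2 : ∑ a, ((if D a ≤ t then outcomeProb M ψ a else 0)
        + (if D a ≤ t then 0 else outcomeProb M ψ a)) = 1 := by
      rw [← hsum_p]
      apply Finset.sum_congr rfl
      intro a _
      by_cases hc : D a ≤ t <;> simp [hc]
    rw [Finset.sum_add_distrib] at hsum2
    linarith
  have hbad : (∑ a, if D a ≤ t then 0 else outcomeProb M ψ a) ≤ 4 * t := by
    by_cases hδpos : 0 < δ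
    · have htpos : 0 < t := Real.rpow_pos_of_pos hδpos _
      have hterm : ∀ a, (if D a ≤ t then (0:ℝ) else outcomeProb M ψ a)
          ≤ outcomeProb M ψ a * (D a)^2 / t^2 := by
        intro a
        by_cases hc : D a ≤ t
        · rw [if_pos hc]
          apply div_nonneg (mul_nonneg (hp_nonneg a) (sq_nonneg _)) (sq_nonneg _)
        · rw [if_neg hc]
          push_neg at hc
          have hD2 : t^2 ≤ (D a)^2 := pow_le_pow_left₀ ht0 hc.le 2
          rw [le_div_iff₀ (by positivity)]
          nlinarith [hp_nonneg a]
      have hrpow : 4 * δ^2 / t^2 = 4 * t := by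
        rw [ht]
        rw [show (δ ^ ((2:ℝ)/3))^2 = δ ^ ((4:ℝ)/3) by
          rw [← Real.rpow_natCast (δ ^ ((2:ℝ)/3)) 2, ← Real.rpow_mul hδ0]
          norm_num]
        rw [show δ^2 = δ ^ ((2:ℝ)) by
          rw [← Real.rpow_natCast δ 2]
          norm_num]
        rw [mul_div_assoc, ← Real.rpow_sub hδpos]
        norm_num
      calc (∑ a, if D a ≤ t then (0:ℝ) else outcomeProb M ψ a)
          ≤ ∑ a, outcomeProb M ψ a * (D a)^2 / t^2 := Finset.sum_le_sum fun a _ => hterm a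
        _ = (∑ a, outcomeProb M ψ a * (D a)^2) / t^2 := by rw [← Finset.sum_div]
        _ ≤ 4 * δ^2 / t^2 := by
            apply div_le_div_of_nonneg_right hsumD
            exact sq_nonneg t
        _ = 4 * t := hrpow
    · have hδeq : δ = 0 := le_antisymm (not_lt.mp hδpos) hδ0
      have ht_eq : t = 0 := by rw [ht, hδeq]; exact Real.zero_rpow (by norm_num)
      have hall : ∀ a, (if D a ≤ t then (0:ℝ) else outcomeProb M ψ a) = 0 := by
        intro a
        by_cases hc : D a ≤ t
        · rw [if_pos hc]
        · exfalso
          have hpa : 0 < outcomeProb M ψ a := by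
            by_contra hnp
            have hD0 : D a = 0 := by
              rw [hDdef, postMeasTraceDist, if_neg (by exact hnp)]
            exact hc (hD0 ▸ ht0)
          have hbound := hkey a
          have hsingle : ‖u a - v a‖^2 ≤ ∑ b, ‖u b - v b‖^2 :=
            Finset.single_le_sum (f := fun b => ‖u b - v b‖^2)
              (fun b _ => sq_nonneg _) (Finset.mem_univ a)
          have hz : ∑ b, ‖u b - v b‖^2 ≤ 0 := by
            have h5 := hpars
            rw [hδeq] at h5
            simpa using h5
          have hD2le : (D a)^2 ≤ 0 := by
            have hmul : outcomeProb M ψ a * (D a)^2 ≤ 0 := by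
              have h6 : (4:ℝ) * ‖u a - v a‖^2 ≤ 0 := by linarith
              linarith
            by_contra hgt
            push_neg at hgt
            exact absurd hmul (not_le.mpr (mul_pos hpa hgt))
          have hDa0 : D a = 0 :=
            pow_eq_zero_iff (by norm_num : (2:ℕ) ≠ 0) |>.mp
              (le_antisymm hD2le (sq_nonneg _))
          exact hc (hDa0 ▸ ht0)
      calc (∑ a, if D a ≤ t then (0:ℝ) else outcomeProb M ψ a) = 0 := by
            apply Finset.sum_eq_zero
            intro a _
            exact hall a
        _ ≤ 4 * t := by rw [ht_eq]; norm_num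
  rw [hsplit]
  linarith
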